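/- In the Lie algebra ℝ³ with the Euclidean cross product, the Tomihisa identity holds: for any five vectors F₁,...,F₅, [F₁, [[F₂,F₃],[F₄,F₅]]] + [F₃, [[F₂,F₅],[F₄,F₁]]] + [F₅, [[F₂,F₁],[F₄,F₃]]] = 0. -/

import Mathlib

open Matrix

/-- Tomihisa identity for ℝ³ with the cross product. -/
theorem tomihisa_crossProduct (F₁ F₂ F₃ F₄ F₅ : Fin 3 → ℝ) :
    F₁ ⨯₃ ((F₂ ⨯₃ F₃) ⨯₃ (F₄ ⨯₃ F₅)) +
      F₃ ⨯₃ ((F₂ ⨯₃ F₅) ⨯₃ (F₄ ⨯₃ F₁)) +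
      F₅ ⨯₃ ((F₂ ⨯₃ F₁) ⨯₃ (F₄ ⨯₃ F₃)) = 0 := by
  funext i
  fin_cases i <;>
    simp [crossProduct, Pi.add_apply] <;> ring
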